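/- Let H be an invertible d×d real matrix and define the symmetric polytope Ω̃ := {ξ ∈ ℝ^d : |(H.mulVec ξ)_j| ≤ 1 for all j}. Let A be a d×d real matrix, B a d×p real matrix, 𝒵 ⊆ ℝ^p a set containing 0, and η ∈ (0,1), and assume the invariance condition (A.mulVec '' Ω̃) ⊕ (B.mulVec '' 𝒵) ⊆ η • Ω̃. Then the matrix A is Schur: every complex eigenvalue of A (i.e., every eigenvalue of the complexification of A) has modulus strictly less than 1. -/

import Mathlib

open Pointwise

/-- Theorem 2, point b): if the symmetric polytope `Ω̃` with invertible shape
matrix `H` satisfies the contractive invariance condition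
`(A '' Ω̃) ⊕ (B '' 𝒵) ⊆ η • Ω̃` with `η ∈ (0,1)` and `0 ∈ 𝒵`, then `A` is a
Schur matrix: every complex eigenvalue of (the complexification of) `A` has
modulus strictly less than 1. -/
theorem contractive_polytope_invariance_implies_schur
    (d p : ℕ) (H : Matrix (Fin d) (Fin d) ℝ) (hH : IsUnit H.det)
    (A : Matrix (Fin d) (Fin d) ℝ) (B : Matrix (Fin d) (Fin p) ℝ)
    (Z : Set (Fin p → ℝ)) (h0Z : (0 : Fin p → ℝ) ∈ Z)
    (η : ℝ) (hη : η ∈ Set.Ioo (0 : ℝ) 1)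
    (hinv : (A.mulVec '' {ξ : Fin d → ℝ | ∀ j, |H.mulVec ξ j| ≤ 1}) +
        (B.mulVec '' Z) ⊆ η • {ξ : Fin d → ℝ | ∀ j, |H.mulVec ξ j| ≤ 1}) :
    ∀ (μ : ℂ) (v : Fin d → ℂ), v ≠ 0 →
      (A.map (Complex.ofReal)).mulVec v = μ • v → ‖μ‖ < 1 := by
  obtain ⟨hη0, hη1⟩ := hη
  intro μ v hv hev
  set M : Matrix (Fin d) (Fin d) ℝ := H * A * H⁻¹ with hM
  -- Step 1: M contracts the sup norm by a factor η
  have hMbound : ∀ u : Fin d → ℝ, (∀ j, |u j| ≤ 1) → ∀ i, |M.mulVec u i| ≤ η := by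
    intro u hu i
    have hHinv : H.mulVec (H⁻¹.mulVec u) = u := by
      rw [Matrix.mulVec_mulVec, Matrix.mul_nonsing_inv _ hH, Matrix.one_mulVec]
    have hmem : H⁻¹.mulVec u ∈ {ξ : Fin d → ℝ | ∀ j, |H.mulVec ξ j| ≤ 1} := by
      intro j; rw [hHinv]; exact hu j
    have hsum : A.mulVec (H⁻¹.mulVec u) + B.mulVec 0
        ∈ η • {ξ : Fin d → ℝ | ∀ j, |H.mulVec ξ j| ≤ 1} :=
      hinv (Set.add_mem_add ⟨_, hmem, rfl⟩ ⟨0, h0Z, rfl⟩)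
    rw [Matrix.mulVec_zero, add_zero] at hsum
    obtain ⟨ξ', hξ', hξeq⟩ := hsum
    have heq2 : H.mulVec (A.mulVec (H⁻¹.mulVec u)) = η • H.mulVec ξ' := by
      rw [← hξeq, Matrix.mulVec_smul]
    have heq : M.mulVec u = H.mulVec (A.mulVec (H⁻¹.mulVec u)) := by
      rw [hM, ← Matrix.mulVec_mulVec, ← Matrix.mulVec_mulVec]
    rw [heq, heq2]
    have := hξ' i
    simp only [Pi.smul_apply, smul_eq_mul, abs_mul, abs_of_pos hη0]
    calc η * |H.mulVec ξ' i| ≤ η * 1 := by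
          exact mul_le_mul_of_nonneg_left this (le_of_lt hη0)
      _ = η := mul_one η
  -- Step 2: row sums of |M| are at most η
  have hrow : ∀ i, ∑ j, |M i j| ≤ η := by
    intro i
    set u : Fin d → ℝ := fun j => if 0 ≤ M i j then 1 else -1 with hu
    have hub : ∀ j, |u j| ≤ 1 := by
      intro j; rw [hu]; dsimp only; split <;> simp
    have hval : M.mulVec u i = ∑ j, |M i j| := by
      rw [Matrix.mulVec, dotProduct]
      refine Finset.sum_congr rfl fun j _ => ?_
      rw [hu]; dsimp only
      rcases le_or_gt 0 (M i j) with h | h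
      · rw [if_pos h, mul_one, abs_of_nonneg h]
      · rw [if_neg (not_le.mpr h), mul_neg_one, abs_of_neg h]
    calc ∑ j, |M i j| = M.mulVec u i := hval.symm
      _ ≤ |M.mulVec u i| := le_abs_self _
      _ ≤ η := hMbound u hub i
  -- Step 3: complexification
  have hdetc : IsUnit (H.map (Complex.ofReal)).det := by
    have : (H.map (Complex.ofReal)).det = (Complex.ofRealHom : ℝ →+* ℂ) H.det := by
      rw [show H.map Complex.ofReal = (Complex.ofRealHom : ℝ →+* ℂ).mapMatrix H from rfl,
        ← RingHom.map_det]
    rw [this]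
    exact hH.map (Complex.ofRealHom : ℝ →+* ℂ)
  set w : Fin d → ℂ := (H.map Complex.ofReal).mulVec v with hwdef
  have hwne : w ≠ 0 := by
    intro h0
    apply hv
    have := congrArg ((H.map Complex.ofReal)⁻¹).mulVec h0
    rwa [Matrix.mulVec_mulVec, Matrix.nonsing_inv_mul _ hdetc, Matrix.one_mulVec,
      Matrix.mulVec_zero] at this
  have hmapmul : ∀ (X Y : Matrix (Fin d) (Fin d) ℝ),
      (X * Y).map Complex.ofReal = X.map Complex.ofReal * Y.map Complex.ofReal := by
    intro X Y
    exact Matrix.map_mul (f := (Complex.ofRealHom : ℝ →+* ℂ))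
  have hMw : (M.map Complex.ofReal).mulVec w = μ • w := by
    rw [hwdef, Matrix.mulVec_mulVec, ← hmapmul]
    have : M * H = H * A := by
      rw [hM, Matrix.mul_assoc, Matrix.nonsing_inv_mul _ hH, Matrix.mul_one]
    rw [this, hmapmul, ← Matrix.mulVec_mulVec, hev, Matrix.mulVec_smul]
  -- Step 4: pick coordinate of maximal modulus
  obtain ⟨i0, hi0⟩ := Function.ne_iff.mp hwne
  have hne : (Finset.univ : Finset (Fin d)).Nonempty := ⟨i0, Finset.mem_univ i0⟩
  obtain ⟨i, _, hmax⟩ := Finset.exists_max_image Finset.univ (fun j => ‖w j‖) hne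
  have hwi : 0 < ‖w i‖ := by
    have h1 : 0 < ‖w i0‖ := by
      simpa [norm_pos_iff] using hi0
    exact lt_of_lt_of_le h1 (hmax i0 (Finset.mem_univ i0))
  have key : ‖μ‖ * ‖w i‖ ≤ η * ‖w i‖ := by
    have h1 : ‖μ‖ * ‖w i‖ = ‖(M.map Complex.ofReal).mulVec w i‖ := by
      rw [hMw]; simp [map_mul]
    rw [h1, Matrix.mulVec, dotProduct]
    calc ‖∑ j, (M.map Complex.ofReal) i j * w j‖
        ≤ ∑ j, ‖(M.map Complex.ofReal) i j * w j‖ :=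
          norm_sum_le _ _
      _ = ∑ j, |M i j| * ‖w j‖ := by
          refine Finset.sum_congr rfl fun j _ => ?_
          rw [norm_mul, Matrix.map_apply, Complex.norm_real, Real.norm_eq_abs]
      _ ≤ ∑ j, |M i j| * ‖w i‖ := by
          refine Finset.sum_le_sum fun j _ => ?_
          exact mul_le_mul_of_nonneg_left (hmax j (Finset.mem_univ j)) (abs_nonneg _)
      _ = (∑ j, |M i j|) * ‖w i‖ := by rw [Finset.sum_mul]
      _ ≤ η * ‖w i‖ :=
          mul_le_mul_of_nonneg_right (hrow i) (le_of_lt hwi)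
  have : ‖μ‖ ≤ η := le_of_mul_le_mul_right key hwi
  exact lt_of_le_of_lt this hη1
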